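/- Let a, b be positive integers with gcd(a,b) = 1 and let k ≥ 2 be an integer. The following are equivalent: (1) every k-IP-set contains positive integers x, y, z, not all equal (equivalently, pairwise distinct), with a·x + b·y = (a+b)·z; (2) k > a + b. -/

import Mathlib

/-- `FSk k x` is the set of all finite sums `∑ εᵢ xᵢ` with each `εᵢ ∈ {0,…,k-1}`,
excluding `0`. -/
def FSk (k : ℕ) (x : ℕ → ℕ) : Set ℕ :=
  {s | ∃ n : ℕ, ∃ ε : Fin n → ℕ, (∀ i, ε i < k) ∧ s = ∑ i, ε i * x i} \ {0}

/-- A `k`-IP-set. -/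
def IsKIPSet (k : ℕ) (A : Set ℕ) : Prop :=
  ∃ x : ℕ → ℕ, StrictMono x ∧ (∀ i, 0 < x i) ∧ FSk k x ⊆ A

lemma pad_sum (N : ℕ) (e : ℕ → ℕ) (n M : ℕ) (hnM : n ≤ M)
    (he : ∀ i, n ≤ i → e i = 0) :
    ∑ i ∈ Finset.range n, e i * N ^ i = ∑ i ∈ Finset.range M, e i * N ^ i := by
  apply Finset.sum_subset (Finset.range_subset_range.2 hnM)
  intro i _ hi
  have : n ≤ i := by simpa using Finset.mem_range.not.1 hi |> Nat.le_of_not_lt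
  simp [he i this]

lemma digits_unique (N : ℕ) : ∀ (n : ℕ) (c d : ℕ → ℕ), (∀ i, c i < N) → (∀ i, d i < N) →
    (∑ i ∈ Finset.range n, c i * N ^ i = ∑ i ∈ Finset.range n, d i * N ^ i) →
    ∀ i, i < n → c i = d i := by
  intro n
  induction n with
  | zero => intro c d _ _ _ i hi; omega
  | succ n ih =>
    intro c d hc hd hsum i hi
    have hshift : ∀ (c : ℕ → ℕ), ∑ i ∈ Finset.range n, c (i + 1) * N ^ (i + 1)
        = (∑ i ∈ Finset.range n, c (i + 1) * N ^ i) * N := by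
      intro c
      rw [Finset.sum_mul]
      exact Finset.sum_congr rfl fun i _ => by rw [pow_succ, mul_assoc]
    rw [Finset.sum_range_succ', Finset.sum_range_succ', hshift c, hshift d] at hsum
    simp only [pow_zero, mul_one] at hsum
    have hNpos : 0 < N := lt_of_le_of_lt (Nat.zero_le _) (hc 0)
    have h0 : c 0 = d 0 := by
      have h1 := congrArg (· % N) hsum
      simpa [Nat.mul_add_mod', Nat.mod_eq_of_lt (hc 0), Nat.mod_eq_of_lt (hd 0)] using h1
    have hAB : (∑ i ∈ Finset.range n, c (i + 1) * N ^ i)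
        = ∑ i ∈ Finset.range n, d (i + 1) * N ^ i := by
      have : (∑ i ∈ Finset.range n, c (i + 1) * N ^ i) * N
          = (∑ i ∈ Finset.range n, d (i + 1) * N ^ i) * N := by omega
      exact Nat.eq_of_mul_eq_mul_right hNpos this
    rcases i with _ | j
    · exact h0
    · exact ih (fun i => c (i + 1)) (fun i => d (i + 1)) (fun i => hc _) (fun i => hd _)
        hAB j (by omega)

lemma digit_eq (a b k e f g : ℕ) (ha : 0 < a) (hb : 0 < b) (hab : Nat.gcd a b = 1)
    (hk : k ≤ a + b) (he : e < k) (hf : f < k) (hg : g < k)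
    (heq : a * e + b * f = (a + b) * g) : e = g ∧ f = g := by
  have heq' : a * e + b * f = a * g + b * g := by rw [heq]; ring
  rcases le_or_gt g e with h | h
  · -- g ≤ e, then f ≤ g
    have h1 : a * g ≤ a * e := Nat.mul_le_mul_left a h
    have h2 : b * f ≤ b * g := by linarith
    have hf' : f ≤ g := Nat.le_of_mul_le_mul_left h2 hb
    have key : a * (e - g) = b * (g - f) := by
      zify [h, hf']
      have hz : (a : ℤ) * e + b * f = a * g + b * g := by exact_mod_cast heq'
      linear_combination hz
    have hdvd : b ∣ (e - g) := by
      have : b ∣ a * (e - g) := key ▸ Dvd.intro _ rfl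
      exact (Nat.Coprime.dvd_of_dvd_mul_left (Nat.coprime_comm.1 hab) this)
    obtain ⟨t, ht⟩ := hdvd
    rcases Nat.eq_zero_or_pos t with rfl | htpos
    · have heg : e = g := by omega
      have : b * f = b * g := by
        subst heg; omega
      exact ⟨heg, Nat.eq_of_mul_eq_mul_left hb this⟩
    · exfalso
      have key2 : g - f = a * t := by
        apply Nat.eq_of_mul_eq_mul_left hb
        rw [← key, ht]; ring
      have hbt : b ≤ b * t := Nat.le_mul_of_pos_right b htpos
      have hat : a ≤ a * t := Nat.le_mul_of_pos_right a htpos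
      have hg1 : a * t ≤ g := key2 ▸ Nat.sub_le g f
      have he1 : e = b * t + g := by omega
      linarith
  · -- e < g, then g < f
    exfalso
    have h1 : a * e < a * g := (Nat.mul_lt_mul_left ha).2 h
    have h2 : b * g < b * f := by linarith
    have hgf : g < f := Nat.lt_of_mul_lt_mul_left h2
    have hf' : g ≤ f := le_of_lt hgf
    have h' : e ≤ g := le_of_lt h
    have key : b * (f - g) = a * (g - e) := by
      zify [h', hf']
      have hz : (a : ℤ) * e + b * f = a * g + b * g := by exact_mod_cast heq'
      linear_combination hz
    have hdvd : a ∣ (f - g) := by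
      have : a ∣ b * (f - g) := key ▸ Dvd.intro _ rfl
      exact (Nat.Coprime.dvd_of_dvd_mul_left hab this)
    obtain ⟨t, ht⟩ := hdvd
    have htpos : 0 < t := by
      rcases Nat.eq_zero_or_pos t with rfl | htpos
      · simp at ht; omega
      · exact htpos
    have key2 : g - e = b * t := by
      apply Nat.eq_of_mul_eq_mul_left ha
      rw [← key, ht]; ring
    have hbt : b ≤ b * t := Nat.le_mul_of_pos_right b htpos
    have hat : a ≤ a * t := Nat.le_mul_of_pos_right a htpos
    have hg1 : b * t ≤ g := key2 ▸ Nat.sub_le g e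
    have hf1 : f = a * t + g := by omega
    linarith

/-- For coprime positive integers `a, b` and `k ≥ 2`: every `k`-IP-set contains a
non-trivial (not all entries equal) solution to `a·x + b·y = (a+b)·z` iff
`k > a + b`. -/
theorem stmt13 (a b : ℕ) (ha : 0 < a) (hb : 0 < b) (hab : Nat.gcd a b = 1)
    (k : ℕ) (hk : 2 ≤ k) :
    (∀ A : Set ℕ, IsKIPSet k A →
      ∃ x ∈ A, ∃ y ∈ A, ∃ z ∈ A,
        ¬(x = y ∧ y = z) ∧ a * x + b * y = (a + b) * z) ↔
    a + b < k := by
  constructor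
  · -- hard direction: contrapositive
    intro H
    by_contra hk'
    push_neg at hk'  -- hk' : k ≤ a + b
    set N : ℕ := (a + b) * k with hNdef
    have hN1 : 1 < N := by
      have : 2 * 2 ≤ (a + b) * k := Nat.mul_le_mul (by omega) hk
      omega
    have hmono : StrictMono (fun i : ℕ => N ^ i) :=
      fun i j h => Nat.pow_lt_pow_right hN1 h
    have hpos : ∀ i, 0 < N ^ i := fun i => Nat.pow_pos (by omega)
    obtain ⟨X, hX, Y, hY, Z, hZ, hne, heq⟩ :=
      H (FSk k (fun i => N ^ i)) ⟨fun i => N ^ i, hmono, hpos, subset_rfl⟩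
    obtain ⟨⟨n, ε, hε, hXeq⟩, -⟩ := hX
    obtain ⟨⟨m, δ, hδ, hYeq⟩, -⟩ := hY
    obtain ⟨⟨p, ζ, hζ, hZeq⟩, -⟩ := hZ
    set M : ℕ := max n (max m p) with hM
    set E : ℕ → ℕ := fun i => if h : i < n then ε ⟨i, h⟩ else 0 with hE
    set F : ℕ → ℕ := fun i => if h : i < m then δ ⟨i, h⟩ else 0 with hF
    set G : ℕ → ℕ := fun i => if h : i < p then ζ ⟨i, h⟩ else 0 with hG
    have hEk : ∀ i, E i < k := by
      intro i; simp only [hE]; split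
      · exact hε _
      · omega
    have hFk : ∀ i, F i < k := by
      intro i; simp only [hF]; split
      · exact hδ _
      · omega
    have hGk : ∀ i, G i < k := by
      intro i; simp only [hG]; split
      · exact hζ _
      · omega
    have hXsum : X = ∑ i ∈ Finset.range M, E i * N ^ i := by
      rw [← pad_sum N E n M (by omega) (fun i hi => by simp [hE, Nat.not_lt.2 hi]),
        Finset.sum_range, hXeq]
      exact Finset.sum_congr rfl fun i _ => by simp [hE, i.isLt]
    have hYsum : Y = ∑ i ∈ Finset.range M, F i * N ^ i := by
      rw [← pad_sum N F m M (by omega) (fun i hi => by simp [hF, Nat.not_lt.2 hi]),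
        Finset.sum_range, hYeq]
      exact Finset.sum_congr rfl fun i _ => by simp [hF, i.isLt]
    have hZsum : Z = ∑ i ∈ Finset.range M, G i * N ^ i := by
      rw [← pad_sum N G p M (by omega) (fun i hi => by simp [hG, Nat.not_lt.2 hi]),
        Finset.sum_range, hZeq]
      exact Finset.sum_congr rfl fun i _ => by simp [hG, i.isLt]
    have hL : ∑ i ∈ Finset.range M, (a * E i + b * F i) * N ^ i = a * X + b * Y := by
      rw [hXsum, hYsum, Finset.mul_sum, Finset.mul_sum, ← Finset.sum_add_distrib]
      exact Finset.sum_congr rfl fun i _ => by ring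
    have hR : ∑ i ∈ Finset.range M, ((a + b) * G i) * N ^ i = (a + b) * Z := by
      rw [hZsum, Finset.mul_sum]
      exact Finset.sum_congr rfl fun i _ => by ring
    have habpos : 0 < a + b := by omega
    have hboundC : ∀ i, a * E i + b * F i < N := by
      intro i
      have h1 : a * E i ≤ a * (k - 1) := Nat.mul_le_mul_left a (by have := hEk i; omega)
      have h2 : b * F i ≤ b * (k - 1) := Nat.mul_le_mul_left b (by have := hFk i; omega)
      have h3 : (a + b) * (k - 1) < (a + b) * k := (Nat.mul_lt_mul_left habpos).2 (by omega)
      calc a * E i + b * F i ≤ a * (k - 1) + b * (k - 1) := by omega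
        _ = (a + b) * (k - 1) := by ring
        _ < (a + b) * k := h3
    have hboundD : ∀ i, (a + b) * G i < N := by
      intro i
      exact (Nat.mul_lt_mul_left habpos).2 (hGk i)
    have hdig := digits_unique N M (fun i => a * E i + b * F i) (fun i => (a + b) * G i)
      hboundC hboundD (by rw [hL, hR, heq])
    have hEG : ∀ i, i < M → E i = G i ∧ F i = G i := fun i hi =>
      digit_eq a b k (E i) (F i) (G i) ha hb hab hk' (hEk i) (hFk i) (hGk i) (hdig i hi)
    apply hne
    constructor
    · rw [hXsum, hYsum]
      exact Finset.sum_congr rfl fun i hi => by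
        rw [(hEG i (Finset.mem_range.1 hi)).1, (hEG i (Finset.mem_range.1 hi)).2]
    · rw [hYsum, hZsum]
      exact Finset.sum_congr rfl fun i hi => by
        rw [(hEG i (Finset.mem_range.1 hi)).2]
  · -- easy direction
    intro hk' A ⟨x, hmono, hpos, hsub⟩
    set u := x 0 with hu
    set v := x 1 with hv
    have hupos : 0 < u := hpos 0
    have hvpos : 0 < v := hpos 1
    have mem2 : ∀ c0 c1 : ℕ, c0 < k → c1 < k → c0 * u + c1 * v ≠ 0 →
        c0 * u + c1 * v ∈ A := by
      intro c0 c1 h0 h1 hne0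
      apply hsub
      refine ⟨⟨2, ![c0, c1], ?_, ?_⟩, hne0⟩
      · intro i; fin_cases i <;> simpa
      · simp [Fin.sum_univ_two]; rfl
    refine ⟨(a + b) * u + b * v, ?_, b * v, ?_, a * u + b * v, ?_, ?_, by ring⟩
    · have := mem2 (a + b) b hk' (by omega) (by positivity)
      simpa using this
    · have := mem2 0 b (by omega) (by omega) (by simpa using Nat.mul_ne_zero (by omega) (by omega))
      simpa using this
    · have := mem2 a b (by omega) (by omega) (by positivity)
      simpa using this
    · rintro ⟨h1, -⟩
      have : (a + b) * u = 0 := by omega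
      have := Nat.mul_ne_zero (by omega : a + b ≠ 0) (by omega : u ≠ 0)
      omega
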